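/- A graphon W is connected if and only if it is finitely connected; i.e., for every measurable set U with μ(U) ∈ (0,1) one has ∫_{U×Uᶜ} W > 0 if and only if for every pair of positive-measure measurable sets U, V ⊆ [0,1] there exists m ∈ ℕ with ⟨1_U, 𝒲^m 1_V⟩ > 0. -/

import Mathlib

open MeasureTheory

/-- The `n`-th composition power of a kernel `W` on `[0,1]` (defined for `n ≥ 1`). -/
noncomputable def compPow (W : ℝ → ℝ → ℝ) : ℕ → ℝ → ℝ → ℝ
  | 0 => W
  | 1 => W
  | n + 2 => fun x y => ∫ z in Set.Icc (0:ℝ) 1, compPow W (n + 1) x z * W z y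

/-- `⟨1_U, 𝒲^m 1_V⟩`: for `m = 0` this is `μ(U ∩ V)`, and for `m ≥ 1` it is
`∫_{U × V} W^{∘m}`. -/
noncomputable def ipow (W : ℝ → ℝ → ℝ) (U V : Set ℝ) : ℕ → ℝ
  | 0 => (volume (U ∩ V)).toReal
  | m + 1 => ∫ x in U, ∫ y in V, compPow W (m + 1) x y

/-- A graphon is connected if `∫_{U × Uᶜ} W > 0` for every measurable `U ⊆ [0,1]`
with `0 < μ(U) < 1` (complement taken inside `[0,1]`). -/
def GraphonConnected (W : ℝ → ℝ → ℝ) : Prop :=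
  ∀ S : Set ℝ, MeasurableSet S → S ⊆ Set.Icc (0:ℝ) 1 →
    0 < volume S → volume S < 1 →
    0 < ∫ x in S, ∫ y in Set.Icc (0:ℝ) 1 \ S, W x y

namespace Stmt3Aux

noncomputable def g (W : ℝ → ℝ → ℝ) (U : Set ℝ) : ℕ → ℝ → ℝ
  | 0 => U.indicator 1
  | m + 1 => fun y => ∫ z in Set.Icc (0:ℝ) 1, g W U m z * W z y

lemma measI : volume (Set.Icc (0:ℝ) 1) = 1 := by simp [Real.volume_Icc]

lemma restrict_finite {s : Set ℝ} (hs : s ⊆ Set.Icc (0:ℝ) 1) :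
    IsFiniteMeasure (volume.restrict s) :=
  ⟨by
    rw [Measure.restrict_apply_univ]
    exact lt_of_le_of_lt (measure_mono hs) (by simp [Real.volume_Icc])⟩

lemma integrableOn_of_bounded {f : ℝ → ℝ} {s : Set ℝ} (hs : s ⊆ Set.Icc (0:ℝ) 1)
    (hf : Measurable f) (hb : ∀ x, |f x| ≤ 1) : IntegrableOn f s := by
  haveI := restrict_finite hs
  exact (integrable_const (1:ℝ)).mono' hf.aestronglyMeasurable
    (Filter.Eventually.of_forall fun x => by simpa using hb x)

lemma integrable_prod2 {f : ℝ → ℝ → ℝ} (hf : Measurable fun p : ℝ × ℝ => f p.1 p.2)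
    (hb : ∀ x y, |f x y| ≤ 1) {s t : Set ℝ}
    (hs : s ⊆ Set.Icc (0:ℝ) 1) (ht : t ⊆ Set.Icc (0:ℝ) 1) :
    Integrable (Function.uncurry f) ((volume.restrict s).prod (volume.restrict t)) := by
  haveI := restrict_finite hs
  haveI := restrict_finite ht
  exact (integrable_const (1:ℝ)).mono' hf.aestronglyMeasurable
    (Filter.Eventually.of_forall fun p => by
      simpa [Function.uncurry] using hb p.1 p.2)

lemma abs_le_one_of {a : ℝ} (h0 : 0 ≤ a) (h1 : a ≤ 1) : |a| ≤ 1 := by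
  rw [abs_of_nonneg h0]; exact h1

section W
variable {W : ℝ → ℝ → ℝ}

lemma compPow_nonneg (h0 : ∀ x y, 0 ≤ W x y) : ∀ n x y, 0 ≤ compPow W n x y := by
  intro n
  induction n with
  | zero => exact h0
  | succ k ih =>
    cases k with
    | zero => exact h0
    | succ j =>
      intro x y
      simp only [compPow]
      exact integral_nonneg fun z => mul_nonneg (ih x z) (h0 z y)

lemma compPow_measurable (hmeas : Measurable fun p : ℝ × ℝ => W p.1 p.2) :
    ∀ n, Measurable fun p : ℝ × ℝ => compPow W n p.1 p.2 := by
  intro n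
  induction n with
  | zero => exact hmeas
  | succ k ih =>
    cases k with
    | zero => exact hmeas
    | succ j =>
      have hF : Measurable fun q : (ℝ × ℝ) × ℝ => compPow W (j+1) q.1.1 q.2 * W q.2 q.1.2 :=
        (ih.comp (measurable_fst.fst.prodMk measurable_snd)).mul
          (hmeas.comp (measurable_snd.prodMk measurable_fst.snd))
      have := (hF.stronglyMeasurable.integral_prod_right'
        (ν := volume.restrict (Set.Icc (0:ℝ) 1))).measurable
      simpa only [compPow] using this

lemma compPow_le_one (hmeas : Measurable fun p : ℝ × ℝ => W p.1 p.2)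
    (h0 : ∀ x y, 0 ≤ W x y) (h1 : ∀ x y, W x y ≤ 1) :
    ∀ n x y, compPow W n x y ≤ 1 := by
  intro n
  induction n with
  | zero => exact h1
  | succ k ih =>
    cases k with
    | zero => exact h1
    | succ j =>
      intro x y
      simp only [compPow]
      have hint : IntegrableOn (fun z => compPow W (j+1) x z * W z y) (Set.Icc (0:ℝ) 1) := by
        refine integrableOn_of_bounded subset_rfl ?_ ?_
        · exact ((compPow_measurable hmeas (j+1)).comp
            (measurable_const.prodMk measurable_id)).mul
            (hmeas.comp (measurable_id.prodMk measurable_const))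
        · intro z
          exact abs_le_one_of (mul_nonneg (compPow_nonneg h0 (j+1) x z) (h0 z y))
            (mul_le_one₀ (ih x z) (h0 z y) (h1 z y))
      calc ∫ z in Set.Icc (0:ℝ) 1, compPow W (j+1) x z * W z y
          ≤ ∫ z in Set.Icc (0:ℝ) 1, (1:ℝ) := by
            refine integral_mono hint ?_ fun z => mul_le_one₀ (ih x z) (h0 z y) (h1 z y)
            haveI := restrict_finite (subset_rfl : Set.Icc (0:ℝ) 1 ⊆ _)
            exact integrable_const 1
        _ = 1 := by simp [measI]

end W

section W2
variable {W : ℝ → ℝ → ℝ} {U : Set ℝ}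

lemma g_nonneg (h0 : ∀ x y, 0 ≤ W x y) : ∀ m y, 0 ≤ g W U m y := by
  intro m
  cases m with
  | zero => intro y; simp only [g]; exact Set.indicator_nonneg (fun _ _ => zero_le_one) y
  | succ k =>
    intro y
    simp only [g]
    exact integral_nonneg fun z => mul_nonneg (g_nonneg h0 k z) (h0 z y)

lemma g_measurable (hmeas : Measurable fun p : ℝ × ℝ => W p.1 p.2) (hU : MeasurableSet U) :
    ∀ m, Measurable (g W U m) := by
  intro m
  induction m with
  | zero => exact (measurable_const.indicator hU)
  | succ k ih =>
    have hF : Measurable fun q : ℝ × ℝ => g W U k q.2 * W q.2 q.1 :=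
      (ih.comp measurable_snd).mul (hmeas.comp (measurable_snd.prodMk measurable_fst))
    have := (hF.stronglyMeasurable.integral_prod_right'
      (ν := volume.restrict (Set.Icc (0:ℝ) 1))).measurable
    simpa only [g] using this

lemma g_le_one (hmeas : Measurable fun p : ℝ × ℝ => W p.1 p.2) (hU : MeasurableSet U)
    (h0 : ∀ x y, 0 ≤ W x y) (h1 : ∀ x y, W x y ≤ 1) :
    ∀ m y, g W U m y ≤ 1 := by
  intro m
  cases m with
  | zero => intro y; simp only [g]; exact Set.indicator_le_self' (fun _ _ => by norm_num) y |>.trans (by by_cases h : y ∈ U <;> simp [h])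
  | succ k =>
    intro y
    simp only [g]
    have hint : IntegrableOn (fun z => g W U k z * W z y) (Set.Icc (0:ℝ) 1) := by
      refine integrableOn_of_bounded subset_rfl ?_ ?_
      · exact (g_measurable hmeas hU k).mul (hmeas.comp (measurable_id.prodMk measurable_const))
      · intro z
        exact abs_le_one_of (mul_nonneg (g_nonneg h0 k z) (h0 z y))
          (mul_le_one₀ (g_le_one hmeas hU h0 h1 k z) (h0 z y) (h1 z y))
    calc ∫ z in Set.Icc (0:ℝ) 1, g W U k z * W z y
        ≤ ∫ z in Set.Icc (0:ℝ) 1, (1:ℝ) := by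
          refine integral_mono hint ?_ fun z =>
            mul_le_one₀ (g_le_one hmeas hU h0 h1 k z) (h0 z y) (h1 z y)
          haveI := restrict_finite (subset_rfl : Set.Icc (0:ℝ) 1 ⊆ _)
          exact integrable_const 1
      _ = 1 := by simp [measI]

lemma gW_integrableOn (hmeas : Measurable fun p : ℝ × ℝ => W p.1 p.2)
    (hU : MeasurableSet U) (h0 : ∀ x y, 0 ≤ W x y) (h1 : ∀ x y, W x y ≤ 1)
    (k : ℕ) (y : ℝ) {t : Set ℝ} (ht : t ⊆ Set.Icc (0:ℝ) 1) :
    IntegrableOn (fun z => g W U k z * W z y) t := by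
  refine integrableOn_of_bounded (f := fun z => g W U k z * W z y) ht ?_ ?_
  · exact (g_measurable hmeas hU k).mul (hmeas.comp (measurable_id.prodMk measurable_const))
  · intro z
    exact abs_le_one_of (mul_nonneg (g_nonneg h0 k z) (h0 z y))
      (mul_le_one₀ (g_le_one hmeas hU h0 h1 k z) (h0 z y) (h1 z y))

lemma g_one (hU : MeasurableSet U) (hUI : U ⊆ Set.Icc (0:ℝ) 1) (y : ℝ) :
    g W U 1 y = ∫ z in U, W z y := by
  show (∫ z in Set.Icc (0:ℝ) 1, U.indicator 1 z * W z y) = _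
  have : ∀ z, U.indicator (1 : ℝ → ℝ) z * W z y = U.indicator (fun z => W z y) z := by
    intro z; by_cases h : z ∈ U <;> simp [h]
  rw [integral_congr_ae (Filter.Eventually.of_forall this), setIntegral_indicator hU,
    Set.inter_eq_right.mpr hUI]

lemma compPow_integral_eq (hmeas : Measurable fun p : ℝ × ℝ => W p.1 p.2)
    (h0 : ∀ x y, 0 ≤ W x y) (h1 : ∀ x y, W x y ≤ 1)
    (hU : MeasurableSet U) (hUI : U ⊆ Set.Icc (0:ℝ) 1) :
    ∀ m y, (∫ x in U, compPow W (m+1) x y) = g W U (m+1) y := by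
  intro m
  induction m with
  | zero =>
    intro y
    rw [g_one hU hUI y]
    rfl
  | succ k ih =>
    intro y
    have hswap :
        (∫ x in U, ∫ z in Set.Icc (0:ℝ) 1, compPow W (k+1) x z * W z y)
          = ∫ z in Set.Icc (0:ℝ) 1, ∫ x in U, compPow W (k+1) x z * W z y := by
      refine integral_integral_swap ?_
      refine integrable_prod2 ?_ ?_ hUI subset_rfl
      · exact ((compPow_measurable hmeas (k+1)).comp
          (measurable_fst.prodMk measurable_snd.fst)).mul
          (hmeas.comp (measurable_snd.fst.prodMk measurable_snd.snd)) |>.comp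
          (measurable_fst.prodMk (measurable_snd.prodMk measurable_const)) |>.comp
          measurable_id
      · intro x z
        exact abs_le_one_of (mul_nonneg (compPow_nonneg h0 (k+1) x z) (h0 z y))
          (mul_le_one₀ (compPow_le_one hmeas h0 h1 (k+1) x z) (h0 z y) (h1 z y))
    show (∫ x in U, ∫ z in Set.Icc (0:ℝ) 1, compPow W (k+1) x z * W z y) = _
    rw [hswap]
    have : ∀ z, (∫ x in U, compPow W (k+1) x z * W z y)
        = g W U (k+1) z * W z y := by
      intro z
      rw [integral_mul_const, ih z]
    rw [integral_congr_ae (Filter.Eventually.of_forall this)]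
    rfl

end W2

section W3
variable {W : ℝ → ℝ → ℝ} {U V : Set ℝ}

lemma ipow_eq (hmeas : Measurable fun p : ℝ × ℝ => W p.1 p.2)
    (h0 : ∀ x y, 0 ≤ W x y) (h1 : ∀ x y, W x y ≤ 1)
    (hU : MeasurableSet U) (hV : MeasurableSet V)
    (hUI : U ⊆ Set.Icc (0:ℝ) 1) (hVI : V ⊆ Set.Icc (0:ℝ) 1) :
    ∀ m, ipow W U V m = ∫ y in V, g W U m y := by
  intro m
  cases m with
  | zero =>
    show (volume (U ∩ V)).toReal = ∫ y in V, U.indicator 1 y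
    rw [setIntegral_indicator hU]
    simp [Set.inter_comm, measure_congr]
    rfl
  | succ k =>
    show (∫ x in U, ∫ y in V, compPow W (k+1) x y) = _
    rw [integral_integral_swap (integrable_prod2 (compPow_measurable hmeas (k+1))
      (fun x y => abs_le_one_of (compPow_nonneg h0 (k+1) x y)
        (compPow_le_one hmeas h0 h1 (k+1) x y)) hUI hVI)]
    exact integral_congr_ae (Filter.Eventually.of_forall fun y =>
      compPow_integral_eq hmeas h0 h1 hU hUI k y)

end W3
end Stmt3Aux

open Stmt3Aux in
theorem stmt_3 (W : ℝ → ℝ → ℝ)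
    (hmeas : Measurable fun p : ℝ × ℝ => W p.1 p.2)
    (hsym : ∀ x y, W x y = W y x)
    (h0 : ∀ x y, 0 ≤ W x y) (h1 : ∀ x y, W x y ≤ 1) :
    GraphonConnected W ↔
      ∀ U V : Set ℝ, MeasurableSet U → MeasurableSet V →
        U ⊆ Set.Icc (0:ℝ) 1 → V ⊆ Set.Icc (0:ℝ) 1 →
        0 < volume U → 0 < volume V →
        ∃ m : ℕ, 0 < ipow W U V m := by
  set I : Set ℝ := Set.Icc (0:ℝ) 1 with hI
  have hImeas : MeasurableSet I := measurableSet_Icc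
  have hWb : ∀ x y, |W x y| ≤ 1 := fun x y => abs_le_one_of (h0 x y) (h1 x y)
  constructor
  · -- connected → finitely connected
    intro hconn U V hU hV hUI hVI hUpos hVpos
    set A : Set ℝ := I ∩ ⋃ m, {y | 0 < g W U m y} with hA
    have hAmeas : MeasurableSet A :=
      hImeas.inter (MeasurableSet.iUnion fun m =>
        measurableSet_lt measurable_const (g_measurable hmeas hU m))
    have hAI : A ⊆ I := Set.inter_subset_left
    have hUA : U ⊆ A := by
      intro x hx
      refine ⟨hUI hx, Set.mem_iUnion.mpr ⟨0, ?_⟩⟩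
      show (0:ℝ) < g W U 0 x
      simp [g, Set.indicator_of_mem hx]
    have hApos : 0 < volume A := lt_of_lt_of_le hUpos (measure_mono hUA)
    -- for y ∉ A (y ∈ I), all g m y = 0
    have hgz : ∀ y ∈ I \ A, ∀ m, g W U m y = 0 := by
      intro y hy m
      have : ¬ (0 < g W U m y) := by
        intro h
        exact hy.2 ⟨hy.1, Set.mem_iUnion.mpr ⟨m, h⟩⟩
      linarith [g_nonneg (U := U) h0 m y, not_lt.mp this]
    -- for y ∈ I \ A, ∫ z in A, W z y = 0
    have hkey : ∀ y ∈ I \ A, (∫ z in A, W z y) = 0 := by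
      intro y hy
      have hzero : ∀ m, (fun z => g W U m z * W z y) =ᵐ[volume.restrict I] 0 := by
        intro m
        have hint : IntegrableOn (fun z => g W U m z * W z y) I :=
          integrableOn_of_bounded subset_rfl
            ((g_measurable hmeas hU m).mul
              (hmeas.comp (measurable_id.prodMk measurable_const)))
            (fun z => abs_le_one_of (mul_nonneg (g_nonneg h0 m z) (h0 z y))
              (mul_le_one₀ (g_le_one hmeas hU h0 h1 m z) (h0 z y) (h1 z y)))
        have h0' : (∫ z in I, g W U m z * W z y) = 0 := hgz y hy (m+1)
        exact (integral_eq_zero_iff_of_nonneg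
          (fun z => mul_nonneg (g_nonneg h0 m z) (h0 z y)) hint).mp h0'
      have hallI : ∀ᵐ z ∂(volume.restrict I), ∀ m, g W U m z * W z y = 0 :=
        (ae_all_iff).mpr fun m => hzero m
      have hallA : ∀ᵐ z ∂(volume.restrict A), ∀ m, g W U m z * W z y = 0 :=
        ae_restrict_of_ae_restrict_of_subset hAI hallI
      have hmemA : ∀ᵐ z ∂(volume.restrict A), z ∈ A := ae_restrict_mem hAmeas
      have : (fun z => W z y) =ᵐ[volume.restrict A] 0 := by
        filter_upwards [hallA, hmemA] with z hz hzA
        obtain ⟨-, hzU⟩ := hzA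
        obtain ⟨m, hm⟩ := Set.mem_iUnion.mp hzU
        have := hz m
        rcases mul_eq_zero.mp this with h | h
        · exact absurd h (ne_of_gt hm)
        · exact h
      exact integral_eq_zero_of_ae this
    -- double integral over A × (I \ A) is zero
    have hdouble : (∫ x in A, ∫ y in I \ A, W x y) = 0 := by
      rw [integral_integral_swap (integrable_prod2 hmeas hWb hAI Set.diff_subset)]
      rw [setIntegral_congr_fun (hImeas.diff hAmeas) (fun y hy => hkey y hy)]
      simp
    have hA1 : volume A = 1 := by
      refine le_antisymm (le_trans (measure_mono hAI) (le_of_eq measI)) ?_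
      by_contra hlt
      push_neg at hlt
      have h := hconn A hAmeas hAI hApos hlt
      rw [hdouble] at h
      exact lt_irrefl _ h
    have hIA0 : volume (I \ A) = 0 := by
      rw [measure_diff hAI hAmeas.nullMeasurableSet (by rw [hA1]; exact ENNReal.one_ne_top),
        hA1, measI, tsub_self]
    have hVA : 0 < volume (V ∩ A) := by
      have hVdiff : volume (V \ A) = 0 :=
        measure_mono_null (Set.diff_subset_diff_left hVI) hIA0
      have : volume V ≤ volume (V ∩ A) + volume (V \ A) := by
        conv_lhs => rw [← Set.inter_union_diff V A]
        exact measure_union_le _ _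
      rw [hVdiff, add_zero] at this
      exact lt_of_lt_of_le hVpos this
    have : ∃ m, 0 < volume ({y | 0 < g W U m y} ∩ V) := by
      by_contra hc
      push_neg at hc
      simp only [le_zero_iff] at hc
      have hsub : V ∩ A ⊆ ⋃ m, {y | 0 < g W U m y} ∩ V := by
        rintro y ⟨hyV, -, hyU⟩
        obtain ⟨m, hm⟩ := Set.mem_iUnion.mp hyU
        exact Set.mem_iUnion.mpr ⟨m, hm, hyV⟩
      have := measure_mono_null hsub (measure_iUnion_null hc)
      exact absurd this (ne_of_gt hVA)
    obtain ⟨m, hm⟩ := this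
    refine ⟨m, ?_⟩
    rw [ipow_eq hmeas h0 h1 hU hV hUI hVI m]
    refine (setIntegral_pos_iff_support_of_nonneg_ae
      (Filter.Eventually.of_forall fun y => g_nonneg h0 m y)
      (integrableOn_of_bounded hVI (g_measurable hmeas hU m)
        (fun y => abs_le_one_of (g_nonneg h0 m y) (g_le_one hmeas hU h0 h1 m y)))).mpr ?_
    refine lt_of_lt_of_le hm (measure_mono ?_)
    rintro y ⟨hy, hyV⟩
    exact ⟨ne_of_gt hy, hyV⟩
  · -- finitely connected → connected
    intro hfin S hS hSI hSpos hSlt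
    by_contra hle
    push_neg at hle
    have hdmeas : MeasurableSet (I \ S) := hImeas.diff hS
    have hdI : I \ S ⊆ I := Set.diff_subset
    have heq0 : (∫ x in S, ∫ y in I \ S, W x y) = 0 :=
      le_antisymm hle (integral_nonneg fun x => integral_nonneg fun y => h0 x y)
    have hdpos : 0 < volume (I \ S) := by
      rw [measure_diff hSI hS.nullMeasurableSet (ne_top_of_lt hSlt), measI]
      exact tsub_pos_iff_lt.mpr hSlt
    -- g 1 vanishes a.e. on I \ S
    have hswap : (∫ y in I \ S, g W S 1 y) = ∫ x in S, ∫ y in I \ S, W x y := by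
      rw [setIntegral_congr_fun hdmeas (fun y _ => g_one hS hSI y)]
      exact (integral_integral_swap (f := fun x y => W x y)
        (integrable_prod2 hmeas hWb hSI hdI)).symm
    have hg1int : IntegrableOn (g W S 1) (I \ S) :=
      integrableOn_of_bounded hdI (g_measurable hmeas hS 1)
        (fun y => abs_le_one_of (g_nonneg h0 1 y) (g_le_one hmeas hS h0 h1 1 y))
    have hg1 : g W S 1 =ᵐ[volume.restrict (I \ S)] 0 := by
      refine (integral_eq_zero_iff_of_nonneg (fun y => g_nonneg h0 1 y) hg1int).mp ?_
      rw [hswap, heq0]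
    -- all g m vanish a.e. on I \ S
    have hind : ∀ m, g W S m =ᵐ[volume.restrict (I \ S)] 0 := by
      intro m
      induction m with
      | zero =>
        filter_upwards [ae_restrict_mem hdmeas] with y hy
        exact Set.indicator_of_notMem hy.2 _
      | succ k ih =>
        have hbound : ∀ y, g W S (k+1) y ≤ g W S 1 y := by
          intro y
          have hIsplit : (∫ z in I, g W S k z * W z y)
              = (∫ z in S, g W S k z * W z y) + ∫ z in I \ S, g W S k z * W z y := by
            rw [← MeasureTheory.setIntegral_union Set.disjoint_sdiff_right (hImeas.diff hS)
              (gW_integrableOn hmeas hS h0 h1 k y hSI)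
              (gW_integrableOn hmeas hS h0 h1 k y hdI), Set.union_diff_cancel hSI]
          have hzero2 : (∫ z in I \ S, g W S k z * W z y) = 0 := by
            refine integral_eq_zero_of_ae ?_
            filter_upwards [ih] with z hz
            rw [Pi.zero_apply] at hz
            rw [hz, zero_mul]
            rfl
          have hmono : (∫ z in S, g W S k z * W z y) ≤ ∫ z in S, W z y := by
            refine setIntegral_mono
              (gW_integrableOn hmeas hS h0 h1 k y hSI)
              (integrableOn_of_bounded (f := fun z => W z y) hSI
                (hmeas.comp (measurable_id.prodMk measurable_const))
                (fun z => hWb z y))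
              (fun z => mul_le_of_le_one_left (h0 z y) (g_le_one hmeas hS h0 h1 k z))
          calc g W S (k+1) y = ∫ z in I, g W S k z * W z y := rfl
            _ = (∫ z in S, g W S k z * W z y) + ∫ z in I \ S, g W S k z * W z y := hIsplit
            _ = ∫ z in S, g W S k z * W z y := by rw [hzero2, add_zero]
            _ ≤ ∫ z in S, W z y := hmono
            _ = g W S 1 y := (g_one hS hSI y).symm
        filter_upwards [hg1] with y hy
        rw [Pi.zero_apply] at hy ⊢
        exact le_antisymm (hy ▸ hbound y) (g_nonneg h0 (k+1) y)
    obtain ⟨m, hm⟩ := hfin S (I \ S) hS hdmeas hSI hdI hSpos hdpos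
    cases m with
    | zero =>
      have : ipow W S (I \ S) 0 = 0 := by
        show (volume (S ∩ (I \ S))).toReal = 0
        rw [Set.inter_diff_self]
        simp
      rw [this] at hm
      exact lt_irrefl _ hm
    | succ k =>
      have : ipow W S (I \ S) (k+1) = 0 := by
        rw [ipow_eq hmeas h0 h1 hS hdmeas hSI hdI (k+1)]
        exact integral_eq_zero_of_ae (hind (k+1))
      rw [this] at hm
      exact lt_irrefl _ hm
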